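/- Let G be an inverse semigroup and A a G-algebra. The set G_E is closed under the multiplication and the involution of 𝔽(G,A), and it is an inverse semigroup: every k ∈ G_E satisfies k·k*·k = k and k*·k·k* = k*, and any two idempotent elements of G_E commute (so that each k ∈ G_E has k* as its unique generalized inverse). -/

import Mathlib

/-! Common setup: inverse semigroups, G-algebras, and the universal *-algebra 𝔽(G,A). -/

noncomputable section

/-- An inverse semigroup: a semigroup in which every element `g` has a unique
generalized inverse, denoted `star g`. -/
class InverseSemigroup (G : Type*) extends Semigroup G, Star G where
  mul_star_mul_self : ∀ g : G, g * star g * g = g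
  star_mul_self_mul_star : ∀ g : G, star g * g * star g = star g
  star_unique : ∀ g h : G, g * h * g = g → h * g * h = h → h = star g

namespace Green

/-! ### The free complex *-algebra on a set of generators

The free complex *-algebra on a set `Y` is realized as the monoid algebra of the free
monoid on the letters `Y × Bool` (a generator together with a formal star flag); its star
operation conjugates coefficients, reverses words and flips the star flags. -/

/-- The free complex *-algebra on the set `Y`. -/
abbrev FreeStar (Y : Type*) := MonoidAlgebra ℂ (FreeMonoid (Y × Bool))

namespace FreeStar

variable {Y : Type*}

/-- Star of a word: reverse it and flip all star flags. -/
def wordStar (w : FreeMonoid (Y × Bool)) : FreeMonoid (Y × Bool) :=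
  FreeMonoid.ofList (((FreeMonoid.toList w).map fun x => (x.1, !x.2)).reverse)

lemma wordStar_mul (v w : FreeMonoid (Y × Bool)) :
    wordStar (v * w) = wordStar w * wordStar v := by
  simp [wordStar, FreeMonoid.toList_mul]

lemma wordStar_wordStar (w : FreeMonoid (Y × Bool)) : wordStar (wordStar w) = w := by
  simp [wordStar, List.map_reverse, List.map_map, Function.comp_def]

/-- The star operation on the free complex *-algebra, as an additive map. -/
def starAux : FreeStar Y →+ FreeStar Y :=
  MonoidAlgebra.coeffAddEquiv.symm.toAddMonoidHom.comp ((Finsupp.mapDomain.addMonoidHom wordStar).comp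
    ((Finsupp.mapRange.addMonoidHom (starRingEnd ℂ).toAddMonoidHom).comp
      MonoidAlgebra.coeffAddEquiv.toAddMonoidHom))

lemma starAux_apply (f : FreeStar Y) :
    starAux f = MonoidAlgebra.ofCoeff
      (Finsupp.mapDomain wordStar (Finsupp.mapRange (starRingEnd ℂ) (map_zero _) f.coeff)) :=
  rfl

lemma starAux_single (w : FreeMonoid (Y × Bool)) (c : ℂ) :
    starAux (MonoidAlgebra.single w c) = MonoidAlgebra.single (wordStar w) (starRingEnd ℂ c) := by
  rw [starAux_apply]
  rw [MonoidAlgebra.coeff_single, Finsupp.mapRange_single, Finsupp.mapDomain_single]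
  rfl

instance instStarRing : StarRing (FreeStar Y) where
  star := starAux
  star_involutive := by
    intro f
    induction f using MonoidAlgebra.induction_linear with
    | zero => simp
    | add f g hf hg => simp_all [map_add]
    | single w c => simp [starAux_single, wordStar_wordStar, starRingEnd_self_apply]
  star_mul := by
    intro f g
    show starAux (f * g) = starAux g * starAux f
    induction f using MonoidAlgebra.induction_linear with
    | zero => simp
    | add f f' hf hf' => simp [mul_add, add_mul, map_add, hf, hf']
    | single w c =>
      induction g using MonoidAlgebra.induction_linear with
      | zero => simp
      | add g g' hg hg' => simp [mul_add, add_mul, map_add, hg, hg']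
      | single v d =>
        simp only [MonoidAlgebra.single_mul_single, starAux_single, wordStar_mul, map_mul]
        rw [mul_comm]
  star_add := map_add _

end FreeStar

section GAlgebra

variable {G : Type*} [InverseSemigroup G]
variable {A : Type*} [NonUnitalNormedRing A] [StarRing A] [CStarRing A] [NormedSpace ℂ A]
  [IsScalarTower ℂ A A] [SMulCommClass ℂ A A] [StarModule ℂ A] [CompleteSpace A]

/-- `α` is an action of the inverse semigroup `G` on the C*-algebra `A` making it a
`G`-algebra: a semigroup homomorphism `G → End(A)` into the *-endomorphisms of `A` such
that `g g*(a)·b = a·g g*(b)` for all `a b : A` and `g : G`. -/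
structure IsGAlgebra (α : G → A →⋆ₙₐ[ℂ] A) : Prop where
  map_mul : ∀ g h : G, α (g * h) = (α g).comp (α h)
  central : ∀ (g : G) (a b : A), α (g * star g) a * b = a * α (g * star g) b

variable (α : G → A →⋆ₙₐ[ℂ] A)

/-- The generator of the free *-algebra corresponding to `a ∈ A`. -/
def genA (a : A) : FreeStar (A ⊕ G) := MonoidAlgebra.single (FreeMonoid.of (Sum.inl a, false)) 1

/-- The generator of the free *-algebra corresponding to `g ∈ G`. -/
def genG (g : G) : FreeStar (A ⊕ G) := MonoidAlgebra.single (FreeMonoid.of (Sum.inr g, false)) 1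

/-- The defining relations of `𝔽(G,A)`: the *-algebra relations of `A` are respected, the
multiplication and involution of `G` are respected, and `g(a)·g g* = g·a·g*`,
`[g g*, a] = 0` hold; the relation is moreover closed under `star`, so that the ideal
generated by it is a two-sided *-ideal. -/
inductive Rel : FreeStar (A ⊕ G) → FreeStar (A ⊕ G) → Prop
  | add_A (a b : A) : Rel (genA (G := G) (a + b)) (genA a + genA b)
  | smul_A (c : ℂ) (a : A) : Rel (genA (G := G) (c • a)) (c • genA a)
  | mul_A (a b : A) : Rel (genA (G := G) (a * b)) (genA a * genA b)
  | star_A (a : A) : Rel (genA (G := G) (star a)) (star (genA a))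
  | mul_G (g h : G) : Rel (genG (A := A) (g * h)) (genG g * genG h)
  | star_G (g : G) : Rel (genG (A := A) (star g)) (star (genG g))
  | act (g : G) (a : A) :
      Rel (genA (α g a) * genG g * genG (star g)) (genG g * genA a * genG (star g))
  | comm (g : G) (a : A) :
      Rel (genG g * genG (star g) * genA a) (genA a * genG g * genG (star g))
  | star_cl {x y} : Rel x y → Rel (star x) (star y)

/-- The universal *-algebra `𝔽(G,A)`: the quotient of the free complex *-algebra on the
set `A ⊔ G` by the two-sided *-ideal generated by the defining relations. -/
abbrev F := RingQuot (Rel α)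

instance : StarRing (F α) := RingQuot.starRing _ (fun _ _ h => Rel.star_cl h)

/-- The canonical copy of `a ∈ A` inside `𝔽(G,A)`. -/
def ιA (a : A) : F α := RingQuot.mkAlgHom ℂ (Rel α) (genA a)

/-- The canonical copy of `g ∈ G` inside `𝔽(G,A)`. -/
def ιG (g : G) : F α := RingQuot.mkAlgHom ℂ (Rel α) (genG g)

/-- The element `e₀(1-e₁)⋯(1-eₙ)` of `𝔽(G,A)` (product expanded multiplicatively),
given `e₀` and the list `[e₁, …, eₙ]`. -/
def elemP (e₀ : G) (l : List G) : F α :=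
  l.foldl (fun p e => p - p * ιG α e) (ιG α e₀)

/-- The element `g·e₀(1-e₁)⋯(1-eₙ)` of `𝔽(G,A)`. -/
def elemGE (g e₀ : G) (l : List G) : F α := ιG α g * elemP α e₀ l

/-- The set `E(G)` of projections `e₀(1-e₁)⋯(1-eₙ)` in `𝔽(G,A)`, with `e₀, …, eₙ`
idempotents of `G`. -/
def EG : Set (F α) :=
  {x | ∃ (e₀ : G) (l : List G), e₀ * e₀ = e₀ ∧ (∀ e ∈ l, e * e = e) ∧ x = elemP α e₀ l}

/-- The inverse semigroup `G_E = {g·p | g ∈ G, p ∈ E(G)}` inside `𝔽(G,A)`. -/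
def GE : Set (F α) :=
  {x | ∃ (g e₀ : G) (l : List G),
    e₀ * e₀ = e₀ ∧ (∀ e ∈ l, e * e = e) ∧ x = elemGE α g e₀ l}

/-- The extension of the `G`-action along a list: `(id - α e₁)∘⋯∘(id - α eₙ)`. -/
def actL : List G → A → A
  | [] => id
  | e :: l => fun a => actL l a - α e (actL l a)

/-- The extension of the `G`-action to `E(G)`:
`α_{e₀(1-e₁)⋯(1-eₙ)} = α_{e₀}∘(id - α_{e₁})∘⋯∘(id - α_{eₙ})`. -/
def actP (e₀ : G) (l : List G) : A → A := fun a => α e₀ (actL α l a)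

/-- The extension of the `G`-action to `G_E`: `α_{g·p} = α_g ∘ α_p`. -/
def actGE (g e₀ : G) (l : List G) : A → A := fun a => α g (actP α e₀ l a)

/-- The action of `k* = (g·e₀(1-e₁)⋯(1-eₙ))* = g*·(g e₀ g*)(1 - g e₁ g*)⋯(1 - g eₙ g*)`,
for `k = g·e₀(1-e₁)⋯(1-eₙ) ∈ G_E`. -/
def actStar (g e₀ : G) (l : List G) : A → A :=
  fun a => α (star g) (actP α (g * e₀ * star g) (l.map fun e => g * e * star g) a)

/-- The subalgebra `A_{k k*} = α_{k k*}(A) = (α_k ∘ α_{k*})(A)`,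
for `k = g·e₀(1-e₁)⋯(1-eₙ) ∈ G_E`. -/
def carrier (g e₀ : G) (l : List G) : Set A :=
  Set.range fun a => actGE α g e₀ l (actStar α g e₀ l a)

/-- `S` is a sub-inverse semigroup of `G`: a subset closed under multiplication and
involution. -/
structure IsSubInvSemigroup (S : Set G) : Prop where
  mul_mem : ∀ {a b : G}, a ∈ S → b ∈ S → a * b ∈ S
  star_mem : ∀ {a : G}, a ∈ S → star a ∈ S

variable (S : Set G)

/-- The set `E(H')` of projections `e₀(1-e₁)⋯(1-eₙ)` with `e₀, …, eₙ` idempotents of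
`H' = S`. -/
def EH : Set (F α) :=
  {x | ∃ (e₀ : G) (l : List G), (e₀ ∈ S ∧ e₀ * e₀ = e₀) ∧ (∀ e ∈ l, e ∈ S ∧ e * e = e) ∧
    x = elemP α e₀ l}

/-- `H⁽⁰⁾`: the set of nonzero minimal projections of `E(H')`
(where `q ≤ p` means `q p = q`). -/
def H0 : Set (F α) :=
  {p | p ∈ EH α S ∧ p ≠ 0 ∧ ∀ q ∈ EH α S, q ≠ 0 → q * p = q → q = p}

/-- The groupoid `H = {t·e | t ∈ H', e ∈ H⁽⁰⁾} \ {0}` associated to `H'`. -/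
def Hgpd : Set (F α) :=
  {x | x ≠ 0 ∧ ∃ t ∈ S, ∃ e ∈ H0 α S, x = ιG α t * e}

/-- `G_H = {g·e | g ∈ G, e ∈ H⁽⁰⁾, g* g ≥ e} \ {0}`. -/
def GH : Set (F α) :=
  {x | x ≠ 0 ∧ ∃ (g : G), ∃ e ∈ H0 α S, x = ιG α g * e ∧ e * ιG α (star g * g) = e}

/-- The relation `≡` on `G_H`: `g ≡ h` iff `g t = h` for some `t ∈ H`. -/
def equivH (x y : F α) : Prop := ∃ t ∈ Hgpd α S, x * t = y

end GAlgebra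

/-- For an assertion `P`, the scalar `[P]` which is `1` if `P` is true and `0` if `P`
is false. -/
def ind (P : Prop) : ℂ := @ite _ P (Classical.propDecidable P) 1 0

end Green

namespace Green

section ISLemmas
variable {G : Type*} [InverseSemigroup G]
open InverseSemigroup

lemma is_star_idem {e : G} (he : e * e = e) : star e = e :=
  (star_unique e e (by rw [he, he]) (by rw [he, he])).symm

lemma is_star_star (g : G) : star (star g) = g :=
  (star_unique (star g) g (star_mul_self_mul_star g) (mul_star_mul_self g)).symm

lemma is_mul_star_idem (h : G) : (h * star h) * (h * star h) = h * star h := by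
  calc (h * star h) * (h * star h) = h * (star h * h * star h) := by simp only [mul_assoc]
  _ = h * star h := by rw [star_mul_self_mul_star]

lemma is_star_mul_idem (h : G) : (star h * h) * (star h * h) = star h * h := by
  calc (star h * h) * (star h * h) = star h * (h * star h * h) := by simp only [mul_assoc]
  _ = star h * h := by rw [mul_star_mul_self]

lemma is_idem_mul_idem {e f : G} (he : e * e = e) (hf : f * f = f) :
    (e * f) * (e * f) = e * f ∧ e * f = star (e * f) := by
  have he' : ∀ t : G, e * (e * t) = e * t := fun t => by rw [← mul_assoc, he]
  have hf' : ∀ t : G, f * (f * t) = f * t := fun t => by rw [← mul_assoc, hf]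
  have h1 : (e * f) * star (e * f) * (e * f) = e * f := mul_star_mul_self _
  have h2 : star (e * f) * (e * f) * star (e * f) = star (e * f) := star_mul_self_mul_star _
  simp only [mul_assoc] at h1 h2
  have hinv : f * star (e * f) * e = star (e * f) := by
    apply star_unique
    · simp only [mul_assoc]
      simpa only [he', hf'] using h1
    · have := congrArg (fun t => f * (t * e)) h2
      simp only [mul_assoc] at this ⊢
      simpa only [he', hf'] using this
  simp only [mul_assoc] at hinv
  have h4 : star (e * f) * star (e * f) = star (e * f) := by
    have h3 := congrArg (fun t => f * (t * e)) h2
    simp only [mul_assoc] at h3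
    calc star (e * f) * star (e * f)
        = (f * (star (e * f) * e)) * (f * (star (e * f) * e)) := by rw [hinv]
      _ = f * (star (e * f) * (e * (f * (star (e * f) * e)))) := by simp only [mul_assoc]
      _ = f * (star (e * f) * e) := h3
      _ = star (e * f) := hinv
  have h7 : e * f = star (e * f) := by
    conv_lhs => rw [← is_star_star (e * f), is_star_idem h4]
  exact ⟨by rw [h7]; exact h4, h7⟩

lemma is_idem_comm {e f : G} (he : e * e = e) (hf : f * f = f) : e * f = f * e := by
  obtain ⟨hef, sef⟩ := is_idem_mul_idem he hf
  obtain ⟨hfe, sfe⟩ := is_idem_mul_idem hf he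
  have he' : ∀ t : G, e * (e * t) = e * t := fun t => by rw [← mul_assoc, he]
  have hf' : ∀ t : G, f * (f * t) = f * t := fun t => by rw [← mul_assoc, hf]
  have g1 : (e * f) * (f * e) * (e * f) = e * f := by
    simp only [mul_assoc, he', hf']
    simpa only [mul_assoc] using hef
  have g2 : (f * e) * (e * f) * (f * e) = f * e := by
    simp only [mul_assoc, he', hf']
    simpa only [mul_assoc] using hfe
  have := star_unique (e * f) (f * e) g1 g2
  rw [← sef] at this
  exact this.symm

lemma is_conj_idem (h : G) {e : G} (he : e * e = e) :
    (star h * e * h) * (star h * e * h) = star h * e * h := by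
  have h1 : h * (star h * e) = e * (h * star h) := by
    have := (is_idem_comm (is_mul_star_idem h) he)
    simp only [mul_assoc] at this
    exact this
  have h2 : h * (star h * h) = h := by
    have := mul_star_mul_self h
    simp only [mul_assoc] at this
    exact this
  have h1' : ∀ t : G, h * (star h * (e * t)) = e * (h * (star h * t)) := fun t => by
    have := congrArg (fun x => x * t) h1
    simp only [mul_assoc] at this
    exact this
  calc (star h * e * h) * (star h * e * h)
      = star h * (e * (h * (star h * (e * h)))) := by simp only [mul_assoc]
    _ = star h * (e * (e * (h * (star h * h)))) := by rw [h1' h]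
    _ = star h * (e * h) := by rw [h2, ← mul_assoc e e h, he]
    _ = star h * e * h := by rw [mul_assoc]

lemma is_idem_swap (h : G) {e : G} (he : e * e = e) :
    e * h = h * (star h * e * h) := by
  have h1 := congrArg (fun t => t * h) (is_idem_comm he (is_mul_star_idem h))
  simp only [mul_assoc] at h1
  have h2 : h * (star h * h) = h := by
    have := mul_star_mul_self h
    simp only [mul_assoc] at this
    exact this
  rw [h2] at h1
  simpa only [mul_assoc] using h1

lemma is_g_mul_star_mul : ∀ g : G, g * (star g * g) = g := fun g => by
  rw [← mul_assoc]; exact InverseSemigroup.mul_star_mul_self g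

end ISLemmas

set_option linter.unusedSectionVars false

section AuxF
variable {G : Type*} [InverseSemigroup G]
variable {A : Type*} [NonUnitalNormedRing A] [StarRing A] [CStarRing A] [NormedSpace ℂ A]
  [IsScalarTower ℂ A A] [SMulCommClass ℂ A A] [StarModule ℂ A] [CompleteSpace A]
variable (α : G → A →⋆ₙₐ[ℂ] A)

/-- Auxiliary: the product `(1 - e₁)⋯(1 - eₙ)` in `𝔽`. -/
def Qprod (l : List G) : F α := (l.map fun e => 1 - ιG α e).prod

lemma Qprod_nil : Qprod α ([] : List G) = 1 := rfl

lemma Qprod_cons (e : G) (l : List G) :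
    Qprod α (e :: l) = (1 - ιG α e) * Qprod α l := by
  simp [Qprod]

lemma Qprod_append (l m : List G) : Qprod α (l ++ m) = Qprod α l * Qprod α m := by
  simp [Qprod]

lemma elemP_eq (e₀ : G) (l : List G) : elemP α e₀ l = ιG α e₀ * Qprod α l := by
  suffices h : ∀ (l : List G) (a : F α),
      List.foldl (fun p e => p - p * ιG α e) a l = a * Qprod α l by
    exact h l _
  intro l
  induction l with
  | nil => intro a; simp [Qprod_nil]
  | cons e l ih =>
    intro a
    rw [List.foldl_cons, ih, Qprod_cons, ← mul_assoc (G := F α), mul_one_sub]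

lemma elemGE_eq (g e₀ : G) (l : List G) :
    elemGE α g e₀ l = ιG α g * elemP α e₀ l := rfl

lemma ιG_mul (g h : G) : ιG α (g * h) = ιG α g * ιG α h := by
  rw [ιG, ιG, ιG, ← map_mul]
  exact RingQuot.mkAlgHom_rel ℂ (Rel.mul_G g h)

lemma star_mkAlgHom (x : FreeStar (A ⊕ G)) :
    star (RingQuot.mkAlgHom ℂ (Rel α) x) = RingQuot.mkAlgHom ℂ (Rel α) (star x) := by
  simp only [RingQuot.mkAlgHom_def, RingQuot.mkRingHom_def, AlgHom.coe_mk, RingHom.coe_mk,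
    MonoidHom.coe_mk, OneHom.coe_mk]
  rfl

lemma ιG_star (g : G) : star (ιG α g) = ιG α (star g) := by
  rw [ιG, ιG, star_mkAlgHom]
  exact (RingQuot.mkAlgHom_rel ℂ (Rel.star_G g)).symm

lemma commute_ιG_idem {e f : G} (he : e * e = e) (hf : f * f = f) :
    Commute (ιG α e) (ιG α f) := by
  have : ιG α e * ιG α f = ιG α f * ιG α e := by
    rw [← ιG_mul, ← ιG_mul, is_idem_comm he hf]
  exact this

lemma commute_ιG_Qprod {e : G} (he : e * e = e) {l : List G} (hl : ∀ f ∈ l, f * f = f) :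
    Commute (ιG α e) (Qprod α l) := by
  induction l with
  | nil => rw [Qprod_nil]; exact Commute.one_right _
  | cons f l ih =>
    rw [Qprod_cons]
    exact (((Commute.one_right _).sub_right
      (commute_ιG_idem α he (hl f (by simp)))).mul_right
      (ih (fun x hx => hl x (by simp [hx]))))

lemma commute_ιG_elemP {e : G} (he : e * e = e) {e₀ : G} {l : List G}
    (he₀ : e₀ * e₀ = e₀) (hl : ∀ f ∈ l, f * f = f) :
    Commute (ιG α e) (elemP α e₀ l) := by
  rw [elemP_eq]
  exact (commute_ιG_idem α he he₀).mul_right (commute_ιG_Qprod α he hl)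

lemma commute_Qprod_Qprod {l m : List G} (hl : ∀ f ∈ l, f * f = f)
    (hm : ∀ f ∈ m, f * f = f) : Commute (Qprod α l) (Qprod α m) := by
  induction l with
  | nil => rw [Qprod_nil]; exact Commute.one_left _
  | cons f l ih =>
    rw [Qprod_cons]
    exact (((Commute.one_left _).sub_left
      (commute_ιG_Qprod α (hl f (by simp)) hm)).mul_left
      (ih (fun x hx => hl x (by simp [hx]))))

lemma EG_comm {x y : F α} (hx : x ∈ EG α) (hy : y ∈ EG α) : x * y = y * x := by
  obtain ⟨e₀, l, he₀, hl, rfl⟩ := hx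
  obtain ⟨f₀, m, hf₀, hm, rfl⟩ := hy
  rw [elemP_eq, elemP_eq]
  have c11 := commute_ιG_idem α he₀ hf₀
  have c12 := commute_ιG_Qprod α he₀ hm
  have c21 := (commute_ιG_Qprod α hf₀ hl).symm
  have c22 := commute_Qprod_Qprod α hl hm
  exact ((c11.mul_right c12).mul_left (c21.mul_right c22))

lemma Qprod_idem {l : List G} (hl : ∀ f ∈ l, f * f = f) :
    Qprod α l * Qprod α l = Qprod α l := by
  induction l with
  | nil => rw [Qprod_nil, one_mul]
  | cons f l ih =>
    have hf := hl f (by simp)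
    have hl' : ∀ x ∈ l, x * x = x := fun x hx => hl x (by simp [hx])
    have hx : ιG α f * ιG α f = ιG α f := by rw [← ιG_mul, hf]
    have h1 : (1 - ιG α f) * (1 - ιG α f) = 1 - ιG α f := by
      rw [mul_sub, mul_one, sub_mul, one_mul, hx, sub_self, sub_zero]
    have hc : Commute (1 - ιG α f) (Qprod α l) :=
      (Commute.one_left _).sub_left (commute_ιG_Qprod α hf hl')
    rw [Qprod_cons]
    calc ((1 - ιG α f) * Qprod α l) * ((1 - ιG α f) * Qprod α l)
        = (1 - ιG α f) * ((Qprod α l * (1 - ιG α f)) * Qprod α l) := by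
          simp only [mul_assoc (G := F α)]
      _ = (1 - ιG α f) * (((1 - ιG α f) * Qprod α l) * Qprod α l) := by rw [← hc.eq]
      _ = (1 - ιG α f) * ((1 - ιG α f) * (Qprod α l * Qprod α l)) := by
          simp only [mul_assoc (G := F α)]
      _ = (1 - ιG α f) * ((1 - ιG α f) * Qprod α l) := by rw [ih hl']
      _ = ((1 - ιG α f) * (1 - ιG α f)) * Qprod α l := by rw [mul_assoc (G := F α)]
      _ = (1 - ιG α f) * Qprod α l := by rw [h1]

lemma star_Qprod {l : List G} (hl : ∀ f ∈ l, f * f = f) :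
    star (Qprod α l) = Qprod α l := by
  induction l with
  | nil => rw [Qprod_nil, star_one]
  | cons f l ih =>
    have hf := hl f (by simp)
    have hl' : ∀ x ∈ l, x * x = x := fun x hx => hl x (by simp [hx])
    have hc : Commute (1 - ιG α f) (Qprod α l) :=
      (Commute.one_left _).sub_left (commute_ιG_Qprod α hf hl')
    rw [Qprod_cons, star_mul, star_sub, star_one, ιG_star, is_star_idem hf, ih hl', hc.eq]

lemma star_elemP {e₀ : G} {l : List G} (he₀ : e₀ * e₀ = e₀) (hl : ∀ f ∈ l, f * f = f) :
    star (elemP α e₀ l) = elemP α e₀ l := by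
  rw [elemP_eq, star_mul, star_Qprod α hl, ιG_star, is_star_idem he₀,
    (commute_ιG_Qprod α he₀ hl).eq]

lemma elemP_mul {e₀ f₀ : G} {l m : List G} (hf₀ : f₀ * f₀ = f₀)
    (hl : ∀ f ∈ l, f * f = f) :
    elemP α e₀ l * elemP α f₀ m = elemP α (e₀ * f₀) (l ++ m) := by
  rw [elemP_eq, elemP_eq, elemP_eq, ιG_mul, Qprod_append]
  have hc := commute_ιG_Qprod α hf₀ hl
  calc (ιG α e₀ * Qprod α l) * (ιG α f₀ * Qprod α m)
      = ιG α e₀ * ((Qprod α l * ιG α f₀) * Qprod α m) := by simp only [mul_assoc (G := F α)]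
    _ = ιG α e₀ * ((ιG α f₀ * Qprod α l) * Qprod α m) := by rw [← hc.eq]
    _ = ιG α e₀ * ιG α f₀ * (Qprod α l * Qprod α m) := by simp only [mul_assoc (G := F α)]

lemma ιG_mul_elemP (a b : G) (m : List G) :
    ιG α a * elemP α b m = elemP α (a * b) m := by
  rw [elemP_eq, elemP_eq, ← mul_assoc (G := F α), ← ιG_mul]

lemma elemP_sq {e₀ : G} {l : List G} (he₀ : e₀ * e₀ = e₀) (hl : ∀ f ∈ l, f * f = f) :
    elemP α e₀ l * elemP α e₀ l = elemP α e₀ l := by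
  rw [elemP_mul α he₀ hl, he₀, elemP_eq, elemP_eq, Qprod_append, Qprod_idem α hl]

lemma ιG_swap (h : G) {e : G} (he : e * e = e) :
    ιG α e * ιG α h = ιG α h * ιG α (star h * e * h) := by
  rw [← ιG_mul, ← ιG_mul, is_idem_swap h he]

lemma Qprod_swap (h : G) {l : List G} (hl : ∀ f ∈ l, f * f = f) :
    Qprod α l * ιG α h = ιG α h * Qprod α (l.map fun e => star h * e * h) := by
  induction l with
  | nil => rw [Qprod_nil, List.map_nil, Qprod_nil, one_mul, mul_one]
  | cons f l ih =>
    have hf := hl f (by simp)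
    have hl' : ∀ x ∈ l, x * x = x := fun x hx => hl x (by simp [hx])
    rw [Qprod_cons, List.map_cons, Qprod_cons, mul_assoc (G := F α), ih hl', ← mul_assoc (G := F α),
      ← mul_assoc (G := F α)]
    congr 1
    rw [sub_mul, one_mul, mul_sub, mul_one, ιG_swap α h hf]

lemma elemP_swap (h : G) {e₀ : G} {l : List G} (he₀ : e₀ * e₀ = e₀)
    (hl : ∀ f ∈ l, f * f = f) :
    elemP α e₀ l * ιG α h
      = ιG α h * elemP α (star h * e₀ * h) (l.map fun e => star h * e * h) := by
  rw [elemP_eq, elemP_eq, mul_assoc (G := F α), Qprod_swap α h hl, ← mul_assoc (G := F α), ιG_swap α h he₀,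
    mul_assoc (G := F α)]

lemma conj_all_idem (h : G) {l : List G} (hl : ∀ f ∈ l, f * f = f) :
    ∀ f ∈ l.map (fun e => star h * e * h), f * f = f := by
  intro f hf
  obtain ⟨e, he, rfl⟩ := List.mem_map.mp hf
  exact is_conj_idem h (hl e he)

lemma star_elemGE (g e₀ : G) (l : List G) (he₀ : e₀ * e₀ = e₀)
    (hl : ∀ f ∈ l, f * f = f) :
    star (elemGE α g e₀ l)
      = ιG α (star g) * elemP α (star (star g) * e₀ * star g)
          (l.map fun e => star (star g) * e * star g) := by
  rw [elemGE_eq, star_mul, star_elemP α he₀ hl, ιG_star, elemP_swap α (star g) he₀ hl]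

lemma GE_mul_mem {x y : F α} (hx : x ∈ GE α) (hy : y ∈ GE α) : x * y ∈ GE α := by
  obtain ⟨g, e₀, l, he₀, hl, rfl⟩ := hx
  obtain ⟨h, f₀, m, hf₀, hm, rfl⟩ := hy
  have key : elemGE α g e₀ l * elemGE α h f₀ m
      = elemGE α (g * h) ((star h * e₀ * h) * f₀)
          ((l.map fun e => star h * e * h) ++ m) := by
    rw [elemGE_eq, elemGE_eq, elemGE_eq, ιG_mul]
    calc (ιG α g * elemP α e₀ l) * (ιG α h * elemP α f₀ m)
        = ιG α g * ((elemP α e₀ l * ιG α h) * elemP α f₀ m) := by simp only [mul_assoc (G := F α)]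
      _ = ιG α g * ((ιG α h * elemP α (star h * e₀ * h) (l.map fun e => star h * e * h))
            * elemP α f₀ m) := by rw [elemP_swap α h he₀ hl]
      _ = ιG α g * ιG α h * (elemP α (star h * e₀ * h) (l.map fun e => star h * e * h)
            * elemP α f₀ m) := by simp only [mul_assoc (G := F α)]
      _ = _ := by rw [elemP_mul α hf₀ (conj_all_idem h hl)]
  rw [key]
  exact ⟨g * h, _, _,
    (is_idem_mul_idem (is_conj_idem h he₀) hf₀).1,
    fun f hf => by
      rcases List.mem_append.mp hf with h' | h'
      · exact conj_all_idem h hl f h'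
      · exact hm f h', rfl⟩

lemma GE_star_mem {x : F α} (hx : x ∈ GE α) : star x ∈ GE α := by
  obtain ⟨g, e₀, l, he₀, hl, rfl⟩ := hx
  rw [star_elemGE α g e₀ l he₀ hl]
  exact ⟨star g, _, _, is_conj_idem (star g) he₀, conj_all_idem (star g) hl, rfl⟩

lemma GE_mul_star_mem_EG {k : F α} (hk : k ∈ GE α) : k * star k ∈ EG α := by
  obtain ⟨g, e₀, l, he₀, hl, rfl⟩ := hk
  rw [star_elemGE α g e₀ l he₀ hl, elemGE_eq]
  set c : G := star (star g) * e₀ * star g with hc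
  set m : List G := l.map fun e => star (star g) * e * star g with hm
  have key : (ιG α g * elemP α e₀ l) * (ιG α (star g) * elemP α c m)
      = elemP α ((g * star g) * c) m := by
    calc (ιG α g * elemP α e₀ l) * (ιG α (star g) * elemP α c m)
        = ιG α g * ((elemP α e₀ l * ιG α (star g)) * elemP α c m) := by
          simp only [mul_assoc (G := F α)]
      _ = ιG α g * (ιG α (star g) * (elemP α c m * elemP α c m)) := by
          rw [elemP_swap α (star g) he₀ hl]; simp only [mul_assoc (G := F α)]; rfl
      _ = ιG α g * (ιG α (star g) * elemP α c m) := by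
          rw [elemP_sq α (is_conj_idem (star g) he₀) (conj_all_idem (star g) hl)]
      _ = ιG α (g * star g) * elemP α c m := by rw [ιG_mul, mul_assoc (G := F α)]
      _ = elemP α ((g * star g) * c) m := by rw [ιG_mul_elemP]
  rw [key]
  exact ⟨_, _, (is_idem_mul_idem (is_mul_star_idem g) (is_conj_idem (star g) he₀)).1,
    conj_all_idem (star g) hl, rfl⟩

lemma GE_reg {k : F α} (hk : k ∈ GE α) : k * star k * k = k := by
  obtain ⟨g, e₀, l, he₀, hl, rfl⟩ := hk
  have hstar : star (elemGE α g e₀ l) = elemP α e₀ l * ιG α (star g) := by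
    rw [elemGE_eq, star_mul, star_elemP α he₀ hl, ιG_star]
  rw [hstar, elemGE_eq]
  have hc : Commute (ιG α (star g * g)) (elemP α e₀ l) :=
    commute_ιG_elemP α (is_star_mul_idem g) he₀ hl
  calc (ιG α g * elemP α e₀ l) * (elemP α e₀ l * ιG α (star g)) * (ιG α g * elemP α e₀ l)
      = ιG α g * ((elemP α e₀ l * elemP α e₀ l)
          * (ιG α (star g) * ιG α g * elemP α e₀ l)) := by simp only [mul_assoc (G := F α)]
    _ = ιG α g * (elemP α e₀ l * (ιG α (star g * g) * elemP α e₀ l)) := by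
        rw [elemP_sq α he₀ hl, ιG_mul]
    _ = ιG α g * (elemP α e₀ l * (elemP α e₀ l * ιG α (star g * g))) := by rw [hc.eq]
    _ = ιG α g * ((elemP α e₀ l * elemP α e₀ l) * ιG α (star g * g)) := by
        simp only [mul_assoc (G := F α)]
    _ = ιG α g * (ιG α (star g * g) * elemP α e₀ l) := by rw [elemP_sq α he₀ hl, ← hc.eq]
    _ = ιG α (g * (star g * g)) * elemP α e₀ l := by
        rw [ιG_mul α g (star g * g), mul_assoc (G := F α)]
    _ = ιG α g * elemP α e₀ l := by rw [is_g_mul_star_mul]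

lemma GE_reg' {k : F α} (hk : k ∈ GE α) : star k * k * star k = star k := by
  have h := congrArg star (GE_reg α hk)
  rw [star_mul, star_mul, star_star] at h
  rw [mul_assoc (G := F α)]
  exact h

lemma GE_idem_star {p : F α} (hp : p ∈ GE α) (hpp : p * p = p) : star p = p := by
  have h1 : p * star p ∈ EG α := GE_mul_star_mem_EG α hp
  have h2 : star p * p ∈ EG α := by
    have := GE_mul_star_mem_EG α (GE_star_mem α hp)
    rwa [star_star] at this
  have hsq : star p * star p = star p := by rw [← star_mul, hpp]
  have e1 : (p * star p) * (star p * p) = p := by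
    calc (p * star p) * (star p * p) = p * ((star p * star p) * p) := by
          simp only [mul_assoc (G := F α)]
      _ = p * (star p * p) := by rw [hsq]
      _ = p := by rw [← mul_assoc (G := F α)]; exact GE_reg α hp
  have e2 : (star p * p) * (p * star p) = star p := by
    calc (star p * p) * (p * star p) = star p * ((p * p) * star p) := by
          simp only [mul_assoc (G := F α)]
      _ = star p * (p * star p) := by rw [hpp]
      _ = star p := by rw [← mul_assoc (G := F α)]; exact GE_reg' α hp
  have := EG_comm α h1 h2
  rw [e1, e2] at this
  exact this.symm

lemma GE_idem_comm {p q : F α} (hp : p ∈ GE α) (hq : q ∈ GE α)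
    (hpp : p * p = p) (hqq : q * q = q) : p * q = q * p := by
  have hps := GE_idem_star α hp hpp
  have hqs := GE_idem_star α hq hqq
  have hpE : p ∈ EG α := by
    have := GE_mul_star_mem_EG α hp
    rwa [hps, hpp] at this
  have hqE : q ∈ EG α := by
    have := GE_mul_star_mem_EG α hq
    rwa [hqs, hqq] at this
  exact EG_comm α hpE hqE

end AuxF


/-- Let `G` be an inverse semigroup and `A` a `G`-algebra.  The set
`G_E` is closed under the multiplication and the involution of `𝔽(G,A)`, and it is an
inverse semigroup: every `k ∈ G_E` satisfies `k k* k = k` and `k* k k* = k*`, any two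
idempotent elements of `G_E` commute, and each `k ∈ G_E` has `k*` as its unique
generalized inverse. -/
theorem GE_is_inverse_semigroup
    {G : Type*} [InverseSemigroup G]
    {A : Type*} [NonUnitalNormedRing A] [StarRing A] [CStarRing A] [NormedSpace ℂ A]
    [IsScalarTower ℂ A A] [SMulCommClass ℂ A A] [StarModule ℂ A] [CompleteSpace A]
    (α : G → A →⋆ₙₐ[ℂ] A) (hα : IsGAlgebra α) :
    (∀ x ∈ GE α, ∀ y ∈ GE α, x * y ∈ GE α) ∧
    (∀ x ∈ GE α, star x ∈ GE α) ∧
    (∀ k ∈ GE α, k * star k * k = k ∧ star k * k * star k = star k) ∧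
    (∀ p ∈ GE α, ∀ q ∈ GE α, p * p = p → q * q = q → p * q = q * p) ∧
    (∀ k ∈ GE α, ∀ m ∈ GE α, k * m * k = k → m * k * m = m → m = star k) := by
  refine ⟨fun x hx y hy => GE_mul_mem α hx hy,
    fun x hx => GE_star_mem α hx,
    fun k hk => ⟨GE_reg α hk, GE_reg' α hk⟩,
    fun p hp q hq hpp hqq => GE_idem_comm α hp hq hpp hqq,
    fun k hk m hm h1 h2 => ?_⟩
  set n := star k with hn
  have hnk : n * k * n = n := GE_reg' α hk
  have hkn : k * n * k = k := GE_reg α hk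
  have hmkGE : m * k ∈ GE α := GE_mul_mem α hm hk
  have hnkGE : n * k ∈ GE α := GE_mul_mem α (GE_star_mem α hk) hk
  have hkmGE : k * m ∈ GE α := GE_mul_mem α hk hm
  have hknGE : k * n ∈ GE α := GE_mul_mem α hk (GE_star_mem α hk)
  have imk : (m * k) * (m * k) = m * k := by
    rw [mul_assoc m k (m * k), ← mul_assoc k m k, h1]
  have ink : (n * k) * (n * k) = n * k := by
    rw [mul_assoc n k (n * k), ← mul_assoc k n k, hkn]
  have ikm : (k * m) * (k * m) = k * m := by
    rw [mul_assoc k m (k * m), ← mul_assoc m k m, h2]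
  have ikn : (k * n) * (k * n) = k * n := by
    rw [mul_assoc k n (k * n), ← mul_assoc n k n, hnk]
  have comm1 : (m * k) * (n * k) = (n * k) * (m * k) :=
    GE_idem_comm α hmkGE hnkGE imk ink
  have comm2 : (k * m) * (k * n) = (k * n) * (k * m) :=
    GE_idem_comm α hkmGE hknGE ikm ikn
  have e1 : m = n * k * m := by
    calc m = m * k * m := h2.symm
      _ = m * (k * n * k) * m := by rw [hkn]
      _ = ((m * k) * (n * k)) * m := by simp only [mul_assoc (G := F α)]
      _ = ((n * k) * (m * k)) * m := by rw [comm1]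
      _ = n * k * (m * k * m) := by simp only [mul_assoc (G := F α)]
      _ = n * k * m := by rw [h2]
  have e2 : n = n * k * m := by
    calc n = n * k * n := hnk.symm
      _ = n * (k * m * k) * n := by rw [h1]
      _ = n * ((k * m) * (k * n)) := by simp only [mul_assoc (G := F α)]
      _ = n * ((k * n) * (k * m)) := by rw [comm2]
      _ = (n * k * n) * (k * m) := by simp only [mul_assoc (G := F α)]
      _ = n * (k * m) := by rw [hnk]
      _ = n * k * m := (mul_assoc n k m).symm
  exact e1.trans e2.symm

end Green
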